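/- One has I_d(B) ⊆ Q and I_{d−1}(B') ⊆ Q: every d×d minor of B and every (d−1)×(d−1) minor of B' belongs to the defining ideal Q of the special fiber. -/

import Mathlib

open MvPolynomial Matrix

/-- The ideal generated by all `j × j` minors of a matrix. -/
noncomputable def minorsIdeal {A : Type*} [CommRing A] {p q : ℕ}
    (M : Matrix (Fin p) (Fin q) A) (j : ℕ) : Ideal A :=
  Ideal.span { x | ∃ (r : Fin j → Fin p) (c : Fin j → Fin q),
    Function.Injective r ∧ Function.Injective c ∧ x = (M.submatrix r c).det }

/-- The height of an ideal: the infimum of the heights of the primes containing it. -/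
noncomputable def idealHeight {A : Type*} [CommRing A] (I : Ideal A) : ℕ∞ :=
  ⨅ (P : PrimeSpectrum A) (_ : I ≤ P.asIdeal), Order.height P


lemma det_eq_zero_of_left_null {A : Type*} [CommRing A] [IsDomain A] {n : ℕ}
    (M : Matrix (Fin n) (Fin n) A) (v : Fin n → A) (hv : v ≠ 0)
    (h : ∀ j, ∑ i, v i * M i j = 0) : M.det = 0 := by
  rw [← Matrix.exists_vecMul_eq_zero_iff]
  refine ⟨v, hv, funext fun j => ?_⟩
  simpa [Matrix.vecMul, dotProduct] using h j

lemma cofactor_syzygy {R : Type*} [CommRing R] {m : ℕ}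
    (φ : Matrix (Fin (m + 1)) (Fin m) R) (j : Fin m) :
    ∑ i : Fin (m + 1), ((-1) ^ (i : ℕ) * (φ.submatrix i.succAbove id).det) * φ i j = 0 := by
  classical
  set N : Matrix (Fin (m + 1)) (Fin (m + 1)) R :=
    fun i l => Fin.cases (φ i j) (fun l' => φ i l') l with hN
  have h0 : N.det = 0 := by
    refine Matrix.det_zero_of_column_eq (i := (0 : Fin (m + 1))) (j := j.succ)
      (Fin.succ_ne_zero j).symm (fun i => ?_)
    simp [hN]
  rw [Matrix.det_succ_column_zero] at h0
  have hsub : ∀ i : Fin (m + 1), N.submatrix i.succAbove Fin.succ = φ.submatrix i.succAbove id := by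
    intro i
    ext a b
    simp only [Matrix.submatrix_apply]
    simp [hN]
  rw [← h0]
  refine Finset.sum_congr rfl fun i _ => ?_
  rw [hsub i]
  simp [hN]
  ring

theorem stmt_17
    (k : Type*) [Field k] [IsAlgClosed k] (d m : ℕ)
    (hd : 3 ≤ d) (hn : d + 1 ≤ m + 1)
    (φ : Matrix (Fin (m + 1)) (Fin m) (MvPolynomial (Fin d) k))
    (hφlin : ∀ i j, (φ i j).IsHomogeneous 1)
    (g : Fin (m + 1) → MvPolynomial (Fin d) k)
    (hg : ∀ i, g i = (-1) ^ (i : ℕ) * (φ.submatrix i.succAbove id).det)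
    (hhtI : idealHeight (Ideal.span (Set.range g)) = 2)
    (hI1 : minorsIdeal φ 1 = Ideal.span (Set.range MvPolynomial.X))
    (hG : ∀ j : ℕ, m + 1 - d + 2 ≤ j → j ≤ m →
      ((m + 1 - j + 1 : ℕ) : ℕ∞) ≤ idealHeight (minorsIdeal φ j))
    (hnG : idealHeight (minorsIdeal φ (m + 1 - d + 1)) ≤ ((d - 1 : ℕ) : ℕ∞))
    (u : ℕ) (hu1 : 1 ≤ u) (hu2 : u ≤ m + 1 - d)
    (hu : idealHeight (minorsIdeal φ (u + 1)) = ((d - 1 : ℕ) : ℕ∞))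
    (huleast : ∀ v : ℕ, 1 ≤ v →
      idealHeight (minorsIdeal φ (v + 1)) = ((d - 1 : ℕ) : ℕ∞) → u ≤ v)
    (M : Fin d → Matrix (Fin (m + 1)) (Fin m) k)
    (hM0 : ∀ i j, M ⟨0, by omega⟩ i j = if (i : ℕ) = (j : ℕ) ∧ (i : ℕ) < u then 1 else 0)
    (hφcanon : ∀ i j, φ i j = ∑ a : Fin d, MvPolynomial.C (M a i j) * MvPolynomial.X a)
    (φu : Matrix (Fin (m + 1)) (Fin (m - u)) (MvPolynomial (Fin d) k))
    (hφu : ∀ (i : Fin (m + 1)) (j : Fin (m - u)), φu i j = φ i ⟨u + (j : ℕ), by omega⟩)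
    (B : Matrix (Fin d) (Fin m) (MvPolynomial (Fin (m + 1)) k))
    (hBlin : ∀ a j, (B a j).IsHomogeneous 1)
    (hB : ∀ j : Fin m,
      ∑ i : Fin (m + 1), (MvPolynomial.X (Sum.inr i) : MvPolynomial (Fin d ⊕ Fin (m + 1)) k) *
          MvPolynomial.aeval (fun a => MvPolynomial.X (Sum.inl a)) (φ i j)
        = ∑ a : Fin d, MvPolynomial.X (Sum.inl a) *
          MvPolynomial.aeval (fun i => MvPolynomial.X (Sum.inr i)) (B a j))
    (hB0 : ∀ j : Fin m, B ⟨0, by omega⟩ j =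
      if (j : ℕ) < u then MvPolynomial.X (Fin.castSucc j) else 0)
    (B' : Matrix (Fin (d - 1)) (Fin (m - u)) (MvPolynomial (Fin (m + 1)) k))
    (hB' : ∀ (a : Fin (d - 1)) (j : Fin (m - u)),
      B' a j = B ⟨(a : ℕ) + 1, by omega⟩ ⟨u + (j : ℕ), by omega⟩)
    (Q : Ideal (MvPolynomial (Fin (m + 1)) k))
    (hQ : Q = RingHom.ker (MvPolynomial.aeval g :
      MvPolynomial (Fin (m + 1)) k →ₐ[k] MvPolynomial (Fin d) k))
    :
    minorsIdeal B d ≤ Q ∧ minorsIdeal B' (d - 1) ≤ Q := by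
  classical
  obtain ⟨d', rfl⟩ : ∃ d', d = d' + 1 := ⟨d - 1, by omega⟩
  -- C is the matrix B with the variables t_i replaced by the g_i
  set C : Matrix (Fin (d' + 1)) (Fin m) (MvPolynomial (Fin (d' + 1)) k) :=
    fun a j => MvPolynomial.aeval g (B a j) with hC
  -- the cofactor syzygy : ∑ i, g i * φ i j = 0
  have hsyz : ∀ j : Fin m, ∑ i : Fin (m + 1), g i * φ i j = 0 := by
    intro j
    have := cofactor_syzygy φ j
    rw [← this]
    refine Finset.sum_congr rfl fun i _ => ?_
    rw [hg i]
  -- the key identity : ∑ a, X a * C a j = 0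
  have hkey : ∀ j : Fin m, ∑ a : Fin (d' + 1), MvPolynomial.X a * C a j = 0 := by
    intro j
    have h1 := congrArg (MvPolynomial.aeval (Sum.elim MvPolynomial.X g) :
      MvPolynomial (Fin (d' + 1) ⊕ Fin (m + 1)) k →ₐ[k] MvPolynomial (Fin (d' + 1)) k) (hB j)
    simp only [map_sum, _root_.map_mul, MvPolynomial.comp_aeval_apply, MvPolynomial.aeval_X,
      Sum.elim_inl, Sum.elim_inr, MvPolynomial.aeval_X_left_apply] at h1
    simp only [hC]
    rw [← h1]
    exact hsyz j
  have h0e : (0 : Fin (d' + 1)) = ⟨0, by omega⟩ := Fin.ext (by simp)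
  constructor
  · -- I_d(B) ≤ Q
    refine Ideal.span_le.mpr ?_
    rintro x ⟨r, c, hrinj, hcinj, rfl⟩
    rw [hQ, SetLike.mem_coe, RingHom.mem_ker]
    show (MvPolynomial.aeval g : MvPolynomial (Fin (m + 1)) k →ₐ[k] MvPolynomial (Fin (d' + 1)) k)
      (B.submatrix r c).det = 0
    rw [AlgHom.map_det, AlgHom.mapMatrix_apply]
    have hrbij : Function.Bijective r := Finite.injective_iff_bijective.mp hrinj
    refine det_eq_zero_of_left_null _ (fun a => MvPolynomial.X (r a)) ?_ ?_
    · intro hcon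
      exact MvPolynomial.X_ne_zero (σ := Fin (d' + 1)) (R := k) (r 0) (congrFun hcon 0)
    · intro j'
      have := hrbij.sum_comp (fun a => MvPolynomial.X a * C a (c j'))
      simp only [Matrix.map_apply, Matrix.submatrix_apply]
      show ∑ a, MvPolynomial.X (r a) * C (r a) (c j') = 0
      rw [this, hkey]
  · -- I_{d-1}(B') ≤ Q
    refine Ideal.span_le.mpr ?_
    rintro x ⟨r, c, hrinj, hcinj, rfl⟩
    rw [hQ, SetLike.mem_coe, RingHom.mem_ker]
    show (MvPolynomial.aeval g : MvPolynomial (Fin (m + 1)) k →ₐ[k] MvPolynomial (Fin (d' + 1)) k)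
      (B'.submatrix r c).det = 0
    rw [AlgHom.map_det, AlgHom.mapMatrix_apply]
    set e : Fin (d' + 1 - 1) ≃ Fin d' := finCongr (by omega) with he
    have hrbij : Function.Bijective (fun a => e (r a)) :=
      e.bijective.comp (Finite.injective_iff_bijective.mp hrinj)
    -- the truncated key identity
    have hcol : ∀ jc : Fin (m - u), ∑ b : Fin d',
        MvPolynomial.X (Fin.succ b) * C (Fin.succ b) ⟨u + (jc : ℕ), by omega⟩ = 0 := by
      intro jc
      have hk := hkey ⟨u + (jc : ℕ), by omega⟩
      rw [Fin.sum_univ_succ] at hk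
      have hBzero : B (0 : Fin (d' + 1)) ⟨u + (jc : ℕ), by omega⟩ = 0 := by
        rw [h0e, hB0, if_neg (Nat.not_lt.mpr (Nat.le_add_right u _))]
      have h00 : C (0 : Fin (d' + 1)) ⟨u + (jc : ℕ), by omega⟩ = 0 := by
        simp only [hC]
        rw [hBzero, map_zero]
      rw [h00, mul_zero, zero_add] at hk
      exact hk
    refine det_eq_zero_of_left_null _ (fun a => MvPolynomial.X (Fin.succ (e (r a)))) ?_ ?_
    · intro hcon
      exact MvPolynomial.X_ne_zero (σ := Fin (d' + 1)) (R := k) _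
        (congrFun hcon ⟨0, by omega⟩)
    · intro j'
      have hentry : ∀ a : Fin (d' + 1 - 1), ((B'.submatrix r c).map (MvPolynomial.aeval g)) a j'
          = C (Fin.succ (e (r a))) ⟨u + ((c j' : Fin (m - u)) : ℕ), by omega⟩ := by
        intro a
        simp only [Matrix.map_apply, Matrix.submatrix_apply, hC]
        rw [hB' (r a) (c j')]
        congr 1
      calc ∑ a : Fin (d' + 1 - 1), MvPolynomial.X (Fin.succ (e (r a))) *
            ((B'.submatrix r c).map (MvPolynomial.aeval g)) a j'
          = ∑ a : Fin (d' + 1 - 1), MvPolynomial.X (Fin.succ (e (r a))) *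
              C (Fin.succ (e (r a))) ⟨u + ((c j' : Fin (m - u)) : ℕ), by omega⟩ :=
            Finset.sum_congr rfl fun a _ => by rw [hentry a]
        _ = 0 := (Fintype.sum_bijective (fun a => e (r a)) hrbij
              (fun a => MvPolynomial.X (Fin.succ (e (r a))) *
                C (Fin.succ (e (r a))) ⟨u + ((c j' : Fin (m - u)) : ℕ), by omega⟩)
              (fun b => MvPolynomial.X (Fin.succ b) *
                C (Fin.succ b) ⟨u + ((c j' : Fin (m - u)) : ℕ), by omega⟩)
              (fun a => rfl)).trans (hcol (c j'))
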